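/- Let X be a real vector space, n ≥ 2, and let (·,·|·,...,·) be a weak n-inner product on X. Then for all x, y, x₂, ..., xₙ ∈ X the Schwarz type inequality holds: |(x,y|xₙ,...,x₂)| ≤ √((x,x|xₙ,...,x₂)) · √((y,y|xₙ,...,x₂)). -/
import Mathlib


/-- A weak `n`-inner product on a real vector space `X`, where `n = m + 2 ≥ 2`.
The value `f x y v` represents `(x, y | xₙ, …, x₂)`, where the tuple
`v : Fin (m+1) → X` lists the conditioning vectors `xₙ, x_{n-1}, …, x₂`
(so `v 0 = xₙ`). -/
structure WeakNInner (X : Type*) [AddCommGroup X] [Module ℝ X] (m : ℕ) where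
  f : X → X → (Fin (m + 1) → X) → ℝ
  /-- P1 (positivity) -/
  nonneg : ∀ (x : X) (v : Fin (m + 1) → X), 0 ≤ f x x v
  /-- P1 (definiteness): `(x,x|xₙ,…,x₂) = 0` iff `x, x₂, …, xₙ` are linearly dependent. -/
  eq_zero_iff : ∀ (x : X) (v : Fin (m + 1) → X),
    f x x v = 0 ↔ ¬ LinearIndependent ℝ (Fin.cons x v : Fin (m + 2) → X)
  /-- P2 (interchangeability): `(x,x|xₙ,x_{n-1},…,x₂) = (xₙ,xₙ|x,x_{n-1},…,x₂)`. -/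
  interchange : ∀ (x : X) (v : Fin (m + 1) → X),
    f x x v = f (v 0) (v 0) (Function.update v 0 x)
  /-- P3 (symmetry) -/
  symm : ∀ (x y : X) (v : Fin (m + 1) → X), f x y v = f y x v
  /-- P4 (homogeneity) -/
  smul_left : ∀ (α : ℝ) (x y : X) (v : Fin (m + 1) → X),
    f (α • x) y v = α * f x y v
  /-- P5 (additivity) -/
  add_left : ∀ (x x' y : X) (v : Fin (m + 1) → X),
    f (x + x') y v = f x y v + f x' y v

/-- Schwarz type inequality for a weak `n`-inner product:
`|(x,y|xₙ,…,x₂)| ≤ √((x,x|xₙ,…,x₂)) · √((y,y|xₙ,…,x₂))`. -/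
theorem weakNInner_schwarz {X : Type*} [AddCommGroup X] [Module ℝ X]
    {m : ℕ} (P : WeakNInner X m) (x y : X) (v : Fin (m + 1) → X) :
    |P.f x y v| ≤ Real.sqrt (P.f x x v) * Real.sqrt (P.f y y v) := by
  have add_right : ∀ (a b c : X), P.f a (b + c) v = P.f a b v + P.f a c v := by
    intro a b c
    rw [P.symm, P.add_left, P.symm, P.symm c]
  have smul_right : ∀ (α : ℝ) (a b : X), P.f a (α • b) v = α * P.f a b v := by
    intro α a b
    rw [P.symm, P.smul_left, P.symm]
  have key : ∀ t : ℝ, 0 ≤ P.f y y v * (t * t) + (2 * P.f x y v) * t + P.f x x v := by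
    intro t
    have h := P.nonneg (x + t • y) v
    have hexp : P.f (x + t • y) (x + t • y) v
        = P.f y y v * (t * t) + (2 * P.f x y v) * t + P.f x x v := by
      rw [P.add_left, add_right, add_right, P.smul_left, P.smul_left, smul_right,
        smul_right, P.symm y x]
      ring
    linarith [hexp ▸ h]
  have hd := discrim_le_zero key
  have hsq : (P.f x y v) ^ 2 ≤ P.f x x v * P.f y y v := by
    rw [discrim] at hd; nlinarith
  calc |P.f x y v| = Real.sqrt ((P.f x y v) ^ 2) := (Real.sqrt_sq_eq_abs _).symm
    _ ≤ Real.sqrt (P.f x x v * P.f y y v) := Real.sqrt_le_sqrt hsq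
    _ = Real.sqrt (P.f x x v) * Real.sqrt (P.f y y v) :=
        Real.sqrt_mul (P.nonneg x v) _
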